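/- Let α : I → S²(p, r) ⊂ ℝ³ be a C³ curve parametrized by arc-length lying on the sphere of center p and radius r. Then its curvature and torsion satisfy κ = (1/r)√(1 + J²) and τ = J'/(1 + J²), where J(s) = ⟨α(s) − p, α'(s) × α''(s)⟩ is the spherical curvature. -/

import Mathlib

/-- Euclidean dot product on `ℝ³`. -/
noncomputable def edot (x y : Fin 3 → ℝ) : ℝ := ∑ i, x i * y i

/-- Euclidean norm on `ℝ³`. -/
noncomputable def enorm3 (x : Fin 3 → ℝ) : ℝ := Real.sqrt (edot x x)

/-- Euclidean cross product on `ℝ³`. -/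
noncomputable def cross (u v : Fin 3 → ℝ) : Fin 3 → ℝ :=
  ![u 1 * v 2 - u 2 * v 1, u 2 * v 0 - u 0 * v 2, u 0 * v 1 - u 1 * v 0]

/-- The spherical curvature `J = ⟨α − p, α' × α''⟩`. -/
noncomputable def sphJ (α : ℝ → Fin 3 → ℝ) (p : Fin 3 → ℝ) (s : ℝ) : ℝ :=
  edot (α s - p) (cross (deriv α s) (deriv (deriv α) s))

lemma hasDerivAt_edot {f g : ℝ → Fin 3 → ℝ} {f' g' : Fin 3 → ℝ} {s : ℝ}
    (hf : HasDerivAt f f' s) (hg : HasDerivAt g g' s) :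
    HasDerivAt (fun t => edot (f t) (g t)) (edot f' (g s) + edot (f s) g') s := by
  have hfi : ∀ i, HasDerivAt (fun t => f t i) (f' i) s := hasDerivAt_pi.mp hf
  have hgi : ∀ i, HasDerivAt (fun t => g t i) (g' i) s := hasDerivAt_pi.mp hg
  have h : HasDerivAt (fun t => ∑ i : Fin 3, f t i * g t i)
      (∑ i : Fin 3, (f' i * g s i + f s i * g' i)) s :=
    HasDerivAt.fun_sum fun i _ => (hfi i).fun_mul (hgi i)
  have hv : edot f' (g s) + edot (f s) g' = ∑ i : Fin 3, (f' i * g s i + f s i * g' i) := by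
    simp [edot, Finset.sum_add_distrib]
  rw [hv]; exact h

lemma hasDerivAt_cross {f g : ℝ → Fin 3 → ℝ} {f' g' : Fin 3 → ℝ} {s : ℝ}
    (hf : HasDerivAt f f' s) (hg : HasDerivAt g g' s) :
    HasDerivAt (fun t => cross (f t) (g t)) (cross f' (g s) + cross (f s) g') s := by
  have hfi : ∀ i, HasDerivAt (fun t => f t i) (f' i) s := hasDerivAt_pi.mp hf
  have hgi : ∀ i, HasDerivAt (fun t => g t i) (g' i) s := hasDerivAt_pi.mp hg
  have h0 : HasDerivAt (fun t => f t 1 * g t 2 - f t 2 * g t 1)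
      ((cross f' (g s) + cross (f s) g') 0) s := by
    convert ((hfi 1).fun_mul (hgi 2)).fun_sub ((hfi 2).fun_mul (hgi 1)) using 1
    show cross f' (g s) 0 + cross (f s) g' 0 = _
    simp [cross]; ring
    all_goals rfl
  have h1 : HasDerivAt (fun t => f t 2 * g t 0 - f t 0 * g t 2)
      ((cross f' (g s) + cross (f s) g') 1) s := by
    convert ((hfi 2).fun_mul (hgi 0)).fun_sub ((hfi 0).fun_mul (hgi 2)) using 1
    show cross f' (g s) 1 + cross (f s) g' 1 = _
    simp [cross]; ring
    all_goals rfl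
  have h2 : HasDerivAt (fun t => f t 0 * g t 1 - f t 1 * g t 0)
      ((cross f' (g s) + cross (f s) g') 2) s := by
    convert ((hfi 0).fun_mul (hgi 1)).fun_sub ((hfi 1).fun_mul (hgi 0)) using 1
    show cross f' (g s) 2 + cross (f s) g' 2 = _
    simp [cross]; ring
    all_goals rfl
  apply hasDerivAt_pi.mpr
  intro i
  fin_cases i
  · exact h0
  · exact h1
  · exact h2

lemma edot_comm (x y : Fin 3 → ℝ) : edot x y = edot y x := by
  simp [edot, mul_comm]

lemma edot_self_nonneg (x : Fin 3 → ℝ) : 0 ≤ edot x x :=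
  Finset.sum_nonneg fun i _ => mul_self_nonneg _

lemma edot_add_right (x y z : Fin 3 → ℝ) : edot x (y + z) = edot x y + edot x z := by
  simp [edot, mul_add, Finset.sum_add_distrib]

lemma gram_sq (u v w : Fin 3 → ℝ) :
    (edot u (cross v w))^2 =
      edot u u * edot v v * edot w w + 2 * edot u v * edot v w * edot u w
        - edot u u * (edot v w)^2 - edot v v * (edot u w)^2 - edot w w * (edot u v)^2 := by
  simp [edot, cross, Fin.sum_univ_three]; ring

lemma cramer_id (x a b c : Fin 3 → ℝ) :
    edot a (cross b c) * edot x x =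
      edot x (cross b c) * edot a x + edot a (cross x c) * edot b x
        + edot a (cross b x) * edot c x := by
  simp [edot, cross, Fin.sum_univ_three]; ring

lemma lagrange_id (u v : Fin 3 → ℝ) :
    edot (cross u v) (cross u v) = edot u u * edot v v - (edot u v)^2 := by
  simp [edot, cross, Fin.sum_univ_three]; ring

lemma triple_rot (a b c : Fin 3 → ℝ) : edot (cross a b) c = edot a (cross b c) := by
  simp [edot, cross, Fin.sum_univ_three]; ring

lemma triple_swap (a b c : Fin 3 → ℝ) : edot a (cross b c) = - edot b (cross a c) := by
  simp [edot, cross, Fin.sum_univ_three]; ring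

lemma edot_cross_self_left (a b : Fin 3 → ℝ) : edot a (cross a b) = 0 := by
  simp [edot, cross, Fin.sum_univ_three]; ring

lemma edot_cross_self_right (a b : Fin 3 → ℝ) : edot a (cross b b) = 0 := by
  simp [edot, cross, Fin.sum_univ_three]; ring


/-- For a `C³` unit-speed curve on the sphere `S²(p, r)`, the curvature and torsion
are `κ = (1/r)√(1 + J²)` and `τ = J'/(1 + J²)`, where `J` is the spherical curvature. -/
theorem stmt3 (α : ℝ → Fin 3 → ℝ) (p : Fin 3 → ℝ) (r : ℝ) (hr : 0 < r)
    (hα : ContDiff ℝ 3 α)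
    (hunit : ∀ s, edot (deriv α s) (deriv α s) = 1)
    (hsph : ∀ s, edot (α s - p) (α s - p) = r ^ 2) :
    ∀ s,
      enorm3 (deriv (deriv α) s) = (1 / r) * Real.sqrt (1 + (sphJ α p s) ^ 2) ∧
      edot (cross (deriv α s) (deriv (deriv α) s)) (deriv (deriv (deriv α)) s) /
          (enorm3 (cross (deriv α s) (deriv (deriv α) s))) ^ 2 =
        deriv (sphJ α p) s / (1 + (sphJ α p s) ^ 2) := by
  -- regularity
  have e3 : (3 : WithTop ℕ∞) = 2 + 1 := by norm_num
  obtain ⟨hd0, -, hc2⟩ := contDiff_succ_iff_deriv.mp (e3 ▸ hα)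
  have e2 : (2 : WithTop ℕ∞) = 1 + 1 := by norm_num
  obtain ⟨hd1, -, hc1⟩ := contDiff_succ_iff_deriv.mp (e2 ▸ hc2)
  have hd2 : Differentiable ℝ (deriv (deriv α)) := hc1.differentiable one_ne_zero
  have hT : ∀ s, HasDerivAt α (deriv α s) s := fun s => (hd0 s).hasDerivAt
  have hA : ∀ s, HasDerivAt (deriv α) (deriv (deriv α) s) s := fun s => (hd1 s).hasDerivAt
  have hB : ∀ s, HasDerivAt (deriv (deriv α)) (deriv (deriv (deriv α)) s) s :=
    fun s => (hd2 s).hasDerivAt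
  have hβ : ∀ s, HasDerivAt (fun t => α t - p) (deriv α s) s := fun s => (hT s).sub_const p
  -- ⟨β, T⟩ = 0
  have c1 : ∀ s, edot (α s - p) (deriv α s) = 0 := by
    intro s
    have h := hasDerivAt_edot (hβ s) (hβ s)
    have h2 : HasDerivAt (fun t => edot (α t - p) (α t - p)) 0 s := by
      have : (fun t => edot (α t - p) (α t - p)) = fun _ => r ^ 2 := funext hsph
      rw [this]; exact hasDerivAt_const s _
    have := h.unique h2
    rw [edot_comm (deriv α s) (α s - p)] at this
    linarith
  -- ⟨T, A⟩ = 0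
  have c2 : ∀ s, edot (deriv α s) (deriv (deriv α) s) = 0 := by
    intro s
    have h := hasDerivAt_edot (hA s) (hA s)
    have h2 : HasDerivAt (fun t => edot (deriv α t) (deriv α t)) 0 s := by
      have : (fun t => edot (deriv α t) (deriv α t)) = fun _ => (1 : ℝ) := funext hunit
      rw [this]; exact hasDerivAt_const s _
    have := h.unique h2
    rw [edot_comm (deriv (deriv α) s) (deriv α s)] at this
    linarith
  -- ⟨β, A⟩ = -1
  have c3 : ∀ s, edot (α s - p) (deriv (deriv α) s) = -1 := by
    intro s
    have h := hasDerivAt_edot (hβ s) (hA s)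
    have h2 : HasDerivAt (fun t => edot (α t - p) (deriv α t)) 0 s := by
      have : (fun t => edot (α t - p) (deriv α t)) = fun _ => (0 : ℝ) := funext c1
      rw [this]; exact hasDerivAt_const s _
    have h3 := h.unique h2
    rw [edot_comm (deriv α s) (deriv α s)] at h3
    have := hunit s
    linarith
  -- ⟨β, B⟩ = 0
  have c4 : ∀ s, edot (α s - p) (deriv (deriv (deriv α)) s) = 0 := by
    intro s
    have h := hasDerivAt_edot (hβ s) (hB s)
    have h2 : HasDerivAt (fun t => edot (α t - p) (deriv (deriv α) t)) 0 s := by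
      have : (fun t => edot (α t - p) (deriv (deriv α) t)) = fun _ => (-1 : ℝ) := funext c3
      rw [this]; exact hasDerivAt_const s _
    have h3 := h.unique h2
    have := c2 s
    linarith
  -- derivative of J
  have hJ : ∀ s, deriv (sphJ α p) s
      = edot (α s - p) (cross (deriv α s) (deriv (deriv (deriv α)) s)) := by
    intro s
    have h := hasDerivAt_edot (hβ s) (hasDerivAt_cross (hA s) (hB s))
    have h2 : HasDerivAt (sphJ α p)
        (edot (deriv α s) (cross (deriv α s) (deriv (deriv α) s))
          + edot (α s - p)
            (cross (deriv (deriv α) s) (deriv (deriv α) s)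
              + cross (deriv α s) (deriv (deriv (deriv α)) s))) s := h
    rw [h2.deriv, edot_add_right, edot_cross_self_left, edot_cross_self_right]
    ring
  intro s
  have hJdef : sphJ α p s = edot (α s - p) (cross (deriv α s) (deriv (deriv α) s)) := rfl
  -- key algebraic identity: r² ⟨A,A⟩ = 1 + J²
  have key1 : r ^ 2 * edot (deriv (deriv α) s) (deriv (deriv α) s) = 1 + (sphJ α p s) ^ 2 := by
    have hg := gram_sq (α s - p) (deriv α s) (deriv (deriv α) s)
    rw [hsph s, hunit s, c1 s, c2 s, c3 s] at hg
    rw [hJdef]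
    nlinarith [hg]
  have hAA : edot (deriv (deriv α) s) (deriv (deriv α) s) = (1 + (sphJ α p s) ^ 2) / r ^ 2 := by
    field_simp
    linarith [key1]
  have hr2 : (0:ℝ) < r ^ 2 := by positivity
  have hJsq : (0:ℝ) < 1 + (sphJ α p s) ^ 2 := by positivity
  constructor
  · rw [enorm3, hAA, Real.sqrt_div (by positivity : (0:ℝ) ≤ 1 + sphJ α p s ^ 2),
      Real.sqrt_sq hr.le]
    ring
  · -- numerator
    have hnum : edot (cross (deriv α s) (deriv (deriv α) s)) (deriv (deriv (deriv α)) s) * r ^ 2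
        = deriv (sphJ α p) s := by
      have hc := cramer_id (α s - p) (deriv α s) (deriv (deriv α) s) (deriv (deriv (deriv α)) s)
      rw [hsph s] at hc
      rw [triple_rot, hJ s]
      rw [edot_comm (deriv α s) (α s - p), c1 s] at hc
      rw [edot_comm (deriv (deriv α) s) (α s - p), c3 s] at hc
      rw [edot_comm (deriv (deriv (deriv α)) s) (α s - p), c4 s] at hc
      have hswap := triple_swap (deriv α s) (α s - p) (deriv (deriv (deriv α)) s)
      linarith [hc, hswap]
    have hden : (enorm3 (cross (deriv α s) (deriv (deriv α) s))) ^ 2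
        = (1 + (sphJ α p s) ^ 2) / r ^ 2 := by
      rw [enorm3, Real.sq_sqrt (edot_self_nonneg _), lagrange_id, hunit s, c2 s, ← hAA]
      ring
    rw [hden, div_div_eq_mul_div, hnum]
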